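/- arXiv:0811.0851 — 4 statements merged into one kernel-verified Lean document; each statement's English description precedes it below -/
import Mathlib

section
/- On the 6×6 square board, any solution that starts with a single vacancy at a non-corner square and ends with a single peg must use at least 15 moves, where a 'move' is a maximal sequence of consecutive jumps by the same peg; this follows because the 36 holes can be partitioned into 16 regions such that every jump except possibly the first jump of a move must both start and end in regions already 'opened' (a region is opened when a jump starts from it), and every region must be opened before it can be emptied. -/
abbrev Pos := Finset (ℤ × ℤ)

def mid (a c : ℤ × ℤ) : ℤ × ℤ := ((a.1 + c.1) / 2, (a.2 + c.2) / 2)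

def steps : Finset (ℤ × ℤ) := {(2, 0), (-2, 0), (0, 2), (0, -2)}

/-- The jump from `a` to `c` (over `mid a c`) is legal on board `Bd` in position `S`. -/
def LegalJump (Bd S : Pos) (a c : ℤ × ℤ) : Prop :=
  c - a ∈ steps ∧ a ∈ Bd ∧ mid a c ∈ Bd ∧ c ∈ Bd ∧ a ∈ S ∧ mid a c ∈ S ∧ c ∉ S

def doJump (S : Pos) (a c : ℤ × ℤ) : Pos := insert c ((S.erase a).erase (mid a c))

/-- `Plays Bd S js S'`: executing the list of jumps `js` (each legal) from `S` yields `S'`. -/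
inductive Plays (Bd : Pos) : Pos → List ((ℤ × ℤ) × (ℤ × ℤ)) → Pos → Prop
  | nil (S : Pos) : Plays Bd S [] S
  | cons {S S' : Pos} {js : List ((ℤ × ℤ) × (ℤ × ℤ))} {a c : ℤ × ℤ} :
      LegalJump Bd S a c → Plays Bd (doJump S a c) js S' → Plays Bd S ((a, c) :: js) S'

/-- A move: a nonempty chain of jumps by one peg (each jump starts where the previous landed). -/
def IsChainMove (mv : List ((ℤ × ℤ) × (ℤ × ℤ))) : Prop :=
  mv ≠ [] ∧ List.Chain' (fun j1 j2 => j2.1 = j1.2) mv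

noncomputable def board6 : Pos := (Finset.Icc (0 : ℤ) 5) ×ˢ (Finset.Icc (0 : ℤ) 5)

namespace MersonAux

abbrev J := (ℤ × ℤ) × (ℤ × ℤ)

def after (S0 : Pos) (js : List J) : Pos := js.foldl (fun S j => doJump S j.1 j.2) S0

lemma after_append (S0 : Pos) (l1 l2 : List J) :
    after S0 (l1 ++ l2) = after (after S0 l1) l2 := List.foldl_append ..

lemma plays_after {Bd S0 S'} {js : List J} (h : Plays Bd S0 js S') : after S0 js = S' := by
  induction h with
  | nil => rfl
  | cons hleg _ ih => exact ih

lemma plays_legal {Bd S0 S'} {js : List J} (h : Plays Bd S0 js S') :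
    ∀ i (hi : i < js.length),
      LegalJump Bd (after S0 (js.take i)) (js.get ⟨i, hi⟩).1 (js.get ⟨i, hi⟩).2 := by
  induction h with
  | nil => intro i hi; simp at hi
  | cons hleg _ ih =>
    intro i hi
    cases i with
    | zero => simpa [after] using hleg
    | succ i => simpa [after] using ih i (by simpa using hi)

lemma after_take_succ (S0 : Pos) (js : List J) (i : ℕ) (hi : i < js.length) :
    after S0 (js.take (i+1)) =
      doJump (after S0 (js.take i)) (js.get ⟨i,hi⟩).1 (js.get ⟨i,hi⟩).2 := by
  rw [← List.take_concat_get (l := js) hi, List.concat_eq_append, after_append]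
  rfl

lemma vacate_step (S0 : Pos) (js : List J) (i : ℕ) (hi : i < js.length) (x : ℤ × ℤ)
    (h1 : x ∈ after S0 (js.take i)) (h2 : x ∉ after S0 (js.take (i+1))) :
    x = (js.get ⟨i,hi⟩).1 ∨ x = mid (js.get ⟨i,hi⟩).1 (js.get ⟨i,hi⟩).2 := by
  rw [after_take_succ S0 js i hi] at h2
  simp only [doJump, Finset.mem_insert, Finset.mem_erase] at h2
  push_neg at h2
  by_contra hcon
  push_neg at hcon
  exact h2.2 hcon.2 hcon.1 h1

/-- key geometric fact: a jump's start/end are midpoint ± a unit vector -/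
lemma step_mid (a c : ℤ × ℤ) (h : c - a ∈ steps) :
    ∃ e ∈ [((1:ℤ),(0:ℤ)), (0,1)],
      (mid a c - e = a ∧ mid a c + e = c) ∨ (mid a c - e = c ∧ mid a c + e = a) := by
  simp only [steps, Finset.mem_insert, Finset.mem_singleton, Prod.ext_iff, Prod.fst_sub,
    Prod.snd_sub] at h
  simp only [mid, Prod.ext_iff, Prod.fst_sub, Prod.snd_sub, Prod.fst_add, Prod.snd_add,
    List.mem_cons, Prod.mk.injEq]
  rcases h with ⟨h1,h2⟩|⟨h1,h2⟩|⟨h1,h2⟩|⟨h1,h2⟩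
  · exact ⟨(1,0), by simp, Or.inl ⟨⟨by omega, by omega⟩, ⟨by omega, by omega⟩⟩⟩
  · exact ⟨(1,0), by simp, Or.inr ⟨⟨by omega, by omega⟩, ⟨by omega, by omega⟩⟩⟩
  · exact ⟨(0,1), by simp, Or.inl ⟨⟨by omega, by omega⟩, ⟨by omega, by omega⟩⟩⟩
  · exact ⟨(0,1), by simp, Or.inr ⟨⟨by omega, by omega⟩, ⟨by omega, by omega⟩⟩⟩

/-- In a legal play, if region `R` satisfies the Merson condition, starts fully occupied,
and some cell of it is eventually vacated, then some jump starts in `R` at a cell that has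
been occupied at all times up to that jump. -/
lemma exists_virgin (js : List J) (S0 : Pos)
    (hleg : ∀ i (hi : i < js.length),
      LegalJump board6 (after S0 (js.take i)) (js.get ⟨i, hi⟩).1 (js.get ⟨i, hi⟩).2)
    (R : Pos)
    (hM : ∀ x ∈ R, ∀ e ∈ [((1:ℤ),(0:ℤ)), (0,1)],
        x - e ∈ board6 → x + e ∈ board6 → (x - e ∈ R ∨ x + e ∈ R))
    (hR0 : ∀ x ∈ R, x ∈ S0)
    (hvac : ∃ t, ∃ x ∈ R, x ∉ after S0 (js.take t)) :
    ∃ u, ∃ (hu : u < js.length), (js.get ⟨u, hu⟩).1 ∈ R ∧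
      ∀ s ≤ u, (js.get ⟨u, hu⟩).1 ∈ after S0 (js.take s) := by
  classical
  let T := Nat.find hvac
  obtain ⟨x, hxR, hxT⟩ : ∃ x ∈ R, x ∉ after S0 (js.take T) := Nat.find_spec hvac
  have hmin : ∀ s < T, ∀ y ∈ R, y ∈ after S0 (js.take s) := by
    intro s hs y hy
    by_contra hb
    exact Nat.find_min hvac hs ⟨y, hy, hb⟩
  have hT0 : T ≠ 0 := by
    intro h
    rw [h] at hxT
    exact hxT (hR0 x hxR)
  obtain ⟨t0, hT⟩ : ∃ t0, T = t0 + 1 := ⟨T - 1, by omega⟩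
  rw [hT] at hxT hmin
  have ht0 : t0 < js.length := by
    by_contra hb
    push_neg at hb
    have : js.take (t0+1) = js.take t0 := by
      rw [List.take_of_length_le hb, List.take_of_length_le (by omega)]
    rw [this] at hxT
    exact hxT (hmin t0 (Nat.lt_succ_self _) x hxR)
  have hx0 : x ∈ after S0 (js.take t0) := hmin t0 (Nat.lt_succ_self _) x hxR
  have hocc : ∀ s ≤ t0, ∀ y ∈ R, y ∈ after S0 (js.take s) := fun s hs => hmin s (by omega)
  have hl := hleg t0 ht0
  set a := (js.get ⟨t0, ht0⟩).1 with ha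
  set c := (js.get ⟨t0, ht0⟩).2 with hc
  rcases vacate_step S0 js t0 ht0 x hx0 hxT with h | h
  · exact ⟨t0, ht0, h ▸ hxR, fun s hs => h ▸ hocc s hs x hxR⟩
  · obtain ⟨e, he, hor⟩ := step_mid a c hl.1
    have hM' := hM x hxR e he
    have haR : a ∈ R := by
      rcases hor with ⟨h1, h2⟩ | ⟨h1, h2⟩
      · rw [← h] at h1 h2
        rcases hM' (h1 ▸ hl.2.1) (h2 ▸ hl.2.2.2.1) with hh | hh
        · exact h1 ▸ hh
        · exact absurd (hocc t0 le_rfl _ (h2 ▸ hh)) hl.2.2.2.2.2.2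
      · rw [← h] at h1 h2
        rcases hM' (h1 ▸ hl.2.2.2.1) (h2 ▸ hl.2.1) with hh | hh
        · exact absurd (hocc t0 le_rfl _ (h1 ▸ hh)) hl.2.2.2.2.2.2
        · exact h2 ▸ hh
    exact ⟨t0, ht0, haR, fun s hs => hocc s hs a haR⟩

lemma initial_or_chain (ms : List (List J)) (hch : ∀ mv ∈ ms, IsChainMove mv) :
    ∀ u (hu : u < ms.flatten.length),
    (∃ k, k < ms.length ∧ u = ((ms.take k).flatten).length) ∨
    (∃ (h0 : 0 < u) (h1 : u - 1 < ms.flatten.length),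
      (ms.flatten[u-1]'h1).2 = (ms.flatten[u]'hu).1) := by
  induction ms with
  | nil => intro u hu; simp at hu
  | cons mv rest ih =>
    intro u hu
    have hulen : u < mv.length + rest.flatten.length := by simpa using hu
    by_cases hcase : u < mv.length
    · rcases Nat.eq_zero_or_pos u with h0 | h0
      · exact Or.inl ⟨0, by simp, by simp [h0]⟩
      · right
        refine ⟨h0, by omega, ?_⟩
        have e1 : (mv :: rest).flatten[u-1]'(by omega) = mv[u-1]'(by omega) := by
          simp only [List.flatten_cons]
          exact List.getElem_append_left (by omega)
        have e2 : (mv :: rest).flatten[u]'hu = mv[u]'hcase := by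
          simp only [List.flatten_cons]
          exact List.getElem_append_left hcase
        rw [e1, e2]
        have hc := (hch mv (by simp)).2
        replace hc := List.isChain_iff_getElem.mp hc
        have h5 := hc (u-1) (by omega)
        have hidx : u - 1 + 1 = u := by omega
        simp only [hidx] at h5
        exact h5.symm
    · push_neg at hcase
      have hu' : u - mv.length < rest.flatten.length := by omega
      have hmv0 : 0 < mv.length := List.length_pos_iff.mpr (hch mv (by simp)).1
      rcases ih (fun m hm => hch m (by simp [hm])) (u - mv.length) hu' with
        ⟨k, hk, he⟩ | ⟨h0, h1, he⟩
      · left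
        refine ⟨k+1, by simpa using hk, ?_⟩
        simp only [List.take_succ_cons, List.flatten_cons, List.length_append]
        omega
      · right
        refine ⟨by omega, by omega, ?_⟩
        have e1 : (mv :: rest).flatten[u-1]'(by omega)
            = rest.flatten[u - mv.length - 1]'(by omega) := by
          simp only [List.flatten_cons]
          rw [List.getElem_append_right (by omega)]
          simp only [show u - 1 - mv.length = u - mv.length - 1 from by omega]
        have e2 : (mv :: rest).flatten[u]'hu = rest.flatten[u - mv.length]'hu' := by
          simp only [List.flatten_cons]
          rw [List.getElem_append_right (by omega)]
        rw [e1, e2]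
        exact he

/-- The sixteen Merson regions of the 6×6 board. -/
def regs : Finset Pos :=
  { {((0:ℤ),(0:ℤ))}, {(5,0)}, {(0,5)}, {(5,5)},
    {(1,0),(2,0)}, {(3,0),(4,0)}, {(1,5),(2,5)}, {(3,5),(4,5)},
    {(0,1),(0,2)}, {(0,3),(0,4)}, {(5,1),(5,2)}, {(5,3),(5,4)},
    {(1,1),(2,1),(1,2),(2,2)}, {(3,1),(4,1),(3,2),(4,2)},
    {(1,3),(2,3),(1,4),(2,4)}, {(3,3),(4,3),(3,4),(4,4)} }

lemma regs_card : regs.card = 16 := by decide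

lemma regs_M : ∀ R ∈ regs, ∀ x ∈ R, ∀ e ∈ [((1:ℤ),(0:ℤ)), (0,1)],
    x - e ∈ board6 → x + e ∈ board6 → (x - e ∈ R ∨ x + e ∈ R) := by decide

lemma regs_sub : ∀ R ∈ regs, ∀ x ∈ R, x ∈ board6 := by decide

lemma regs_ne : ∀ R ∈ regs, R.Nonempty := by decide

lemma regs_disj : ∀ R ∈ regs, ∀ R' ∈ regs, R ≠ R' → ∀ x ∈ R, x ∉ R' := by decide

lemma board6_card : board6.card = 36 := by decide

end MersonAux

open MersonAux in
/-- On the 6×6 board, any solution from a single non-corner vacancy to a single peg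
uses at least 15 moves (moves = chains of jumps by one peg). -/
theorem sixBySix_noncorner_fifteen_moves (v : ℤ × ℤ) (hv : v ∈ board6)
    (hnc : v ∉ ({((0 : ℤ), (0 : ℤ)), (0, 5), (5, 0), (5, 5)} : Finset (ℤ × ℤ)))
    (w : ℤ × ℤ)
    (moves : List (List ((ℤ × ℤ) × (ℤ × ℤ))))
    (hch : ∀ mv ∈ moves, IsChainMove mv)
    (hp : Plays board6 (board6.erase v) moves.flatten {w}) :
    15 ≤ moves.length := by
  classical
  set S0 : Pos := board6.erase v with hS0
  set js : List J := moves.flatten with hjs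
  have hafter : after S0 js = {w} := plays_after hp
  have hleg := plays_legal hp
  have hPend : after S0 (js.take js.length) = {w} := by rw [List.take_length]; exact hafter
  have hn0 : js.length ≠ 0 := by
    intro h
    rw [List.length_eq_zero_iff] at h
    rw [h] at hafter
    have h35 : S0.card = 35 := by rw [hS0, Finset.card_erase_of_mem hv, board6_card]
    have : S0 = {w} := hafter
    rw [this] at h35
    simp at h35
  -- main: each region avoiding v yields a move-initial jump starting in it
  have main : ∀ R ∈ regs, v ∉ R → ∃ k, k < moves.length ∧
      ∃ (h : ((moves.take k).flatten).length < js.length),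
        (js[((moves.take k).flatten).length]'h).1 ∈ R := by
    intro R hR hvR
    have hR0 : ∀ x ∈ R, x ∈ S0 := fun x hx =>
      Finset.mem_erase.mpr ⟨fun h => hvR (h ▸ hx), regs_sub R hR x hx⟩
    have hvac : ∃ t, ∃ x ∈ R, x ∉ after S0 (js.take t) := by
      by_cases hw : ∃ x ∈ R, x ≠ w
      · obtain ⟨x, hx, hxw⟩ := hw
        exact ⟨js.length, x, hx, by rw [hPend]; simpa using hxw⟩
      · push_neg at hw
        obtain ⟨x0, hx0⟩ := regs_ne R hR
        have hwR : w ∈ R := hw x0 hx0 ▸ hx0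
        obtain ⟨m, hm⟩ : ∃ m, js.length = m + 1 := ⟨js.length - 1, by omega⟩
        have hm' : m < js.length := by omega
        have hlegm := hleg m hm'
        have hcw : (js.get ⟨m, hm'⟩).2 = w := by
          have hmem : (js.get ⟨m, hm'⟩).2 ∈ after S0 (js.take (m+1)) := by
            rw [after_take_succ S0 js m hm']
            exact Finset.mem_insert_self _ _
          rw [← hm, hPend] at hmem
          simpa using hmem
        exact ⟨m, w, hwR, hcw ▸ hlegm.2.2.2.2.2.2⟩
    obtain ⟨u, hu, hstart, hvirgin⟩ := exists_virgin js S0 hleg R (regs_M R hR) hR0 hvac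
    rcases initial_or_chain moves hch u (hjs ▸ hu) with ⟨k, hk, he⟩ | ⟨h0, h1, he⟩
    · subst he
      exact ⟨k, hk, hu, by simpa using hstart⟩
    · exfalso
      have hu1 : u - 1 < js.length := by omega
      have hlegu1 := hleg (u-1) hu1
      have hnotmem := hlegu1.2.2.2.2.2.2
      have hmem := hvirgin (u-1) (by omega)
      have heq : (js.get ⟨u-1, hu1⟩).2 = (js.get ⟨u, hu⟩).1 := by
        simpa [List.get_eq_getElem] using he
      rw [heq] at hnotmem
      exact hnotmem hmem
  -- counting
  have hex : ∀ R : Pos, ∃ k, R ∈ regs.filter (fun R => v ∉ R) →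
      (k < moves.length ∧ ∃ (h : ((moves.take k).flatten).length < js.length),
        (js[((moves.take k).flatten).length]'h).1 ∈ R) := by
    intro R
    by_cases h : R ∈ regs.filter (fun R => v ∉ R)
    · obtain ⟨hR, hvR⟩ := Finset.mem_filter.mp h
      obtain ⟨k, hk⟩ := main R hR hvR
      exact ⟨k, fun _ => hk⟩
    · exact ⟨0, fun h' => absurd h' h⟩
  choose f hf using hex
  have hinj : Set.InjOn f (regs.filter (fun R => v ∉ R)) := by
    intro R hR R' hR' hfe
    obtain ⟨hk, h, hmem⟩ := hf R hR
    obtain ⟨hk', h', hmem'⟩ := hf R' hR'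
    by_contra hne
    have hidx : ((moves.take (f R)).flatten).length = ((moves.take (f R')).flatten).length := by
      rw [hfe]
    simp only [hidx] at hmem
    exact regs_disj R (Finset.mem_filter.mp hR).1 R' (Finset.mem_filter.mp hR').1 hne _ hmem hmem'
  have hmapsto : ∀ R ∈ regs.filter (fun R => v ∉ R), f R ∈ Finset.range moves.length := by
    intro R hR
    exact Finset.mem_range.mpr (hf R hR).1
  have hcard1 : (regs.filter (fun R => v ∈ R)).card ≤ 1 := by
    rw [Finset.card_le_one]
    intro R hR R' hR'
    obtain ⟨hR1, hR2⟩ := Finset.mem_filter.mp hR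
    obtain ⟨hR1', hR2'⟩ := Finset.mem_filter.mp hR'
    by_contra hne
    exact regs_disj R hR1 R' hR1' hne v hR2 hR2'
  have hsplit := Finset.card_filter_add_card_filter_not
    (s := regs) (p := fun R => v ∈ R)
  have hge : 15 ≤ (regs.filter (fun R => v ∉ R)).card := by
    have : (regs.filter (fun R => ¬ v ∈ R)).card
        = regs.card - (regs.filter (fun R => v ∈ R)).card := by omega
    rw [regs_card] at this
    simp only [this]
    omega
  calc 15 ≤ (regs.filter (fun R => v ∉ R)).card := hge
    _ ≤ (Finset.range moves.length).card := Finset.card_le_card_of_injOn f hmapsto hinj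
    _ = moves.length := Finset.card_range _
end

section
/- On the 6×6 square board, any solution to the problem 'vacate a corner square and play to leave a single peg' requires at least 16 moves: the first move necessarily refills the vacated corner region, so after the first move all 16 Merson regions are nonempty and each still requires a move whose first jump opens it. -/
/-! ### Auxiliary development: a Merson-style region count via fibers of `reg`. -/

/-- Assignment of each board cell to one of 16 regions: the four corner singletons,
eight edge dominoes, and four interior 2×2 blocks. -/
def reg (p : ℤ × ℤ) : ℕ :=
  if p = (0,0) then 0 else if p = (5,0) then 1 else if p = (0,5) then 2
  else if p = (5,5) then 3
  else if p.2 = 0 then (if p.1 ≤ 2 then 4 else 5)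
  else if p.2 = 5 then (if p.1 ≤ 2 then 6 else 7)
  else if p.1 = 0 then (if p.2 ≤ 2 then 8 else 9)
  else if p.1 = 5 then (if p.2 ≤ 2 then 10 else 11)
  else if p.1 ≤ 2 then (if p.2 ≤ 2 then 12 else 14)
  else (if p.2 ≤ 2 then 13 else 15)

/-- Region `i` is full in position `S`. -/
def Rfull (i : ℕ) (S : Pos) : Prop := ∀ x ∈ board6, reg x = i → x ∈ S

/-- Every legal jump geometry has its middle cell in the same region as one of its
endpoints. -/
lemma geom : ∀ a ∈ board6, ∀ s ∈ steps, a + s ∈ board6 →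
    reg (mid a (a+s)) = reg a ∨ reg (mid a (a+s)) = reg (a+s) := by decide

lemma legal_geom {S : Pos} {a c : ℤ × ℤ} (h : LegalJump board6 S a c) :
    reg (mid a c) = reg a ∨ reg (mid a c) = reg c := by
  obtain ⟨h1, h2, _, h4, _⟩ := h
  have := geom a h2 (c - a) h1 (by simpa using h4)
  simpa using this

/-- A jump that does not start in region `i` keeps region `i` full. -/
lemma full_step {S : Pos} {a c : ℤ × ℤ} {i : ℕ} (h : LegalJump board6 S a c)
    (hi : reg a ≠ i) (hf : Rfull i S) : Rfull i (doJump S a c) := by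
  intro x hx hr
  rcases eq_or_ne x c with rfl | hxc
  · exact Finset.mem_insert_self _ _
  · have hxa : x ≠ a := fun e => hi (e ▸ hr)
    have hxm : x ≠ mid a c := by
      rintro rfl
      rcases legal_geom h with hm | hm
      · exact hi (hm ▸ hr)
      · exact h.2.2.2.2.2.2 (hf c h.2.2.2.1 (hm ▸ hr))
    exact Finset.mem_insert_of_mem
      (Finset.mem_erase.2 ⟨hxm, Finset.mem_erase.2 ⟨hxa, hf x hx hr⟩⟩)

lemma plays_full {i : ℕ} : ∀ {js : List ((ℤ × ℤ) × (ℤ × ℤ))} {S S' : Pos},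
    Plays board6 S js S' → (∀ j ∈ js, reg j.1 ≠ i) → Rfull i S → Rfull i S'
  | [], S, S', hp, _, hf => by cases hp; exact hf
  | j :: tl, S, S', hp, hj, hf => by
    obtain ⟨a, c⟩ := j
    cases hp with
    | cons hl hp' =>
      exact plays_full hp' (fun j hjm => hj j (List.mem_cons_of_mem _ hjm))
        (full_step hl (hj (a, c) List.mem_cons_self) hf)

/-- If a region is full, the first jump of a chain starting in that region must be
the head of the chain. -/
lemma first_exit {i : ℕ} : ∀ {j₀ : (ℤ × ℤ) × (ℤ × ℤ)} {tl : List ((ℤ × ℤ) × (ℤ × ℤ))}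
    {S S' : Pos}, Plays board6 S (j₀ :: tl) S' →
    List.Chain' (fun j1 j2 => j2.1 = j1.2) (j₀ :: tl) → Rfull i S →
    ∀ j ∈ j₀ :: tl, reg j.1 = i → reg j₀.1 = i
  | j₀, [], S, S', hp, hc, hf, j, hj, hr => by
    rcases List.mem_singleton.1 hj with rfl; exact hr
  | j₀, j₁ :: tl, S, S', hp, hc, hf, j, hj, hr => by
    obtain ⟨a, c⟩ := j₀
    by_cases h0 : reg (a, c).1 = i
    · exact h0
    cases hp with
    | cons hl hp' =>
      have hj' : j ∈ j₁ :: tl := by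
        rcases List.mem_cons.1 hj with rfl | h
        · exact absurd hr h0
        · exact h
      have h1 : reg j₁.1 = i :=
        first_exit hp' hc.tail (full_step hl h0 hf) j hj' hr
      have hcc : j₁.1 = c := (List.isChain_cons_cons.1 hc).1
      have hcS : c ∈ S := hf c hl.2.2.2.1 (by rw [← hcc]; exact h1)
      exact absurd hcS hl.2.2.2.2.2.2

/-- A nonempty sequence of jumps none of which starts in the (full) region of `x`
cannot end in the single peg `{x}`. -/
lemma no_vanish {i : ℕ} {x : ℤ × ℤ} (hx : x ∈ board6) (hr : reg x = i) :
    ∀ {js : List ((ℤ × ℤ) × (ℤ × ℤ))} {S S' : Pos},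
    Plays board6 S js S' → js ≠ [] → (∀ j ∈ js, reg j.1 ≠ i) → Rfull i S → S' ≠ {x}
  | [], _, _, _, hne, _, _ => absurd rfl hne
  | j :: tl, S, S', hp, _, hj, hf => by
    obtain ⟨a, c⟩ := j
    cases hp with
    | cons hl hp' =>
      cases tl with
      | nil =>
        cases hp' with
        | nil =>
          intro hS
          have hcx : c = x := by
            have hmem : c ∈ doJump S a c := Finset.mem_insert_self _ _
            rw [hS] at hmem; exact Finset.mem_singleton.1 hmem
          exact hl.2.2.2.2.2.2 (hcx ▸ hf x hx hr)
      | cons j₁ tl₁ =>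
        exact no_vanish hx hr hp' (by simp)
          (fun j hjm => hj j (List.mem_cons_of_mem _ hjm))
          (full_step hl (hj (a, c) List.mem_cons_self) hf)
lemma plays_append : ∀ {l1 l2 : List ((ℤ × ℤ) × (ℤ × ℤ))} {Bd S S'' : Pos},
    Plays Bd S (l1 ++ l2) S'' → ∃ S', Plays Bd S l1 S' ∧ Plays Bd S' l2 S''
  | [], l2, Bd, S, S'', h => ⟨S, Plays.nil S, h⟩
  | j :: tl, l2, Bd, S, S'', h => by
    obtain ⟨a, c⟩ := j
    cases h with
    | cons hl hp =>
      obtain ⟨S', h1, h2⟩ := plays_append hp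
      exact ⟨S', Plays.cons hl h1, h2⟩

lemma main_count (w : ℤ × ℤ) : ∀ (moves : List (List ((ℤ × ℤ) × (ℤ × ℤ)))) (S : Pos)
    (O : Finset ℕ),
    (∀ mv ∈ moves, IsChainMove mv) → Plays board6 S moves.flatten {w} →
    (∀ i ∈ O, Rfull i S) →
    (∀ i ∈ O, ∃ x ∈ board6, reg x = i) →
    (∀ i ∈ O, ∀ x ∈ board6, reg x = i → S ≠ {x}) →
    O.card ≤ moves.length
  | [], S, O, _, hp, hf, hne, hinv => by
    have hS : S = {w} := by
      simp only [List.flatten_nil] at hp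
      cases hp; rfl
    have hO : O = ∅ := by
      rw [Finset.eq_empty_iff_forall_notMem]
      intro i hi
      obtain ⟨x, hx, hr⟩ := hne i hi
      have hxS : x ∈ S := hf i hi x hx hr
      rw [hS, Finset.mem_singleton] at hxS
      exact hinv i hi x hx hr (by rw [hS, hxS])
    simp [hO]
  | mv :: rest, S, O, hch, hp, hf, hne, hinv => by
    rw [List.flatten_cons] at hp
    obtain ⟨S', hp1, hp2⟩ := plays_append hp
    have hcm : IsChainMove mv := hch mv List.mem_cons_self
    obtain ⟨j₀, mvtl, rfl⟩ : ∃ j₀ mvtl, mv = j₀ :: mvtl := by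
      cases mv with
      | nil => exact absurd rfl hcm.1
      | cons a b => exact ⟨a, b, rfl⟩
    set k := reg j₀.1 with hk
    have key : ∀ i ∈ O.erase k, ∀ j ∈ j₀ :: mvtl, reg j.1 ≠ i := by
      intro i hi j hj hri
      have hik : i ≠ k := (Finset.mem_erase.1 hi).1
      exact hik (by
        have := first_exit hp1 hcm.2 (hf i (Finset.mem_of_mem_erase hi)) j hj hri
        rw [hk, this])
    have hf' : ∀ i ∈ O.erase k, Rfull i S' := fun i hi =>
      plays_full hp1 (key i hi) (hf i (Finset.mem_of_mem_erase hi))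
    have hne' : ∀ i ∈ O.erase k, ∃ x ∈ board6, reg x = i := fun i hi =>
      hne i (Finset.mem_of_mem_erase hi)
    have hinv' : ∀ i ∈ O.erase k, ∀ x ∈ board6, reg x = i → S' ≠ {x} := by
      intro i hi x hx hr
      exact no_vanish hx hr hp1 (by simp) (key i hi)
        (hf i (Finset.mem_of_mem_erase hi))
    have hrec : (O.erase k).card ≤ rest.length :=
      main_count w rest S' (O.erase k)
        (fun m hm => hch m (List.mem_cons_of_mem _ hm)) hp2 hf' hne' hinv'
    have : O.card ≤ (O.erase k).card + 1 := by
      by_cases hkO : k ∈ O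
      · rw [Finset.card_erase_of_mem hkO]
        omega
      · rw [Finset.erase_eq_of_notMem hkO]; omega
    calc O.card ≤ (O.erase k).card + 1 := this
      _ ≤ rest.length + 1 := by omega
      _ = ((j₀ :: mvtl) :: rest).length := by simp


lemma plays_nil_eq {Bd S S' : Pos} (h : Plays Bd S [] S') : S = S' := by
  cases h; rfl

/-- On the 6×6 board, any solution from a vacancy at the corner (0,0) to a single peg
uses at least 16 moves. -/
theorem sixBySix_corner_sixteen_moves (w : ℤ × ℤ)
    (moves : List (List ((ℤ × ℤ) × (ℤ × ℤ))))
    (hch : ∀ mv ∈ moves, IsChainMove mv)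
    (hp : Plays board6 (board6.erase ((0 : ℤ), (0 : ℤ))) moves.flatten {w}) :
    16 ≤ moves.length := by
  set S₀ : Pos := board6.erase ((0 : ℤ), (0 : ℤ)) with hS₀
  -- a singleton cannot equal a position containing two distinct pegs
  have two_ne : ∀ (T : Pos) (p q : ℤ × ℤ), p ∈ T → q ∈ T → p ≠ q → ∀ y, T ≠ {y} := by
    intro T p q hpT hqT hpq y hTy
    rw [hTy, Finset.mem_singleton] at hpT hqT
    exact hpq (hpT.trans hqT.symm)
  obtain ⟨mv₁, rest, rfl⟩ : ∃ mv₁ rest, moves = mv₁ :: rest := by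
    cases moves with
    | nil =>
      exfalso
      simp only [List.flatten_nil] at hp
      exact two_ne S₀ (1,1) (2,2) (by decide) (by decide) (by decide) w
        (plays_nil_eq hp)
    | cons a b => exact ⟨a, b, rfl⟩
  have hcm : IsChainMove mv₁ := hch mv₁ List.mem_cons_self
  obtain ⟨j₁, mvtl, rfl⟩ : ∃ j₁ mvtl, mv₁ = j₁ :: mvtl := by
    cases mv₁ with
    | nil => exact absurd rfl hcm.1
    | cons a b => exact ⟨a, b, rfl⟩
  obtain ⟨a, c⟩ := j₁
  rw [List.flatten_cons, List.cons_append] at hp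
  cases hp with
  | cons hl hp2 =>
    -- the first jump must land on (0,0)
    have hc : c = ((0:ℤ), (0:ℤ)) := by
      have hcb : c ∈ board6 := hl.2.2.2.1
      have hcn : c ∉ S₀ := hl.2.2.2.2.2.2
      by_contra hne
      exact hcn (Finset.mem_erase.2 ⟨hne, hcb⟩)
    subst hc
    have hab : a ∈ board6 := hl.2.1
    have hst := hl.1
    simp only [steps, Finset.mem_insert, Finset.mem_singleton, Prod.ext_iff] at hst
    -- a = (0,2) or a = (2,0)
    have ha : a = ((0:ℤ),(2:ℤ)) ∨ a = ((2:ℤ),(0:ℤ)) := by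
      obtain ⟨a1, a2⟩ := a
      simp only [Prod.mk_sub_mk] at hst
      rcases hst with ⟨h1,h2⟩|⟨h1,h2⟩|⟨h1,h2⟩|⟨h1,h2⟩
      · exfalso; revert hab
        have : (a1, a2) = ((-2:ℤ), (0:ℤ)) := by simp only [Prod.mk.injEq]; omega
        rw [this]; decide
      · right; have h1' : a1 = 2 := by omega
        have h2' : a2 = 0 := by omega
        rw [h1', h2']
      · exfalso; revert hab
        have : (a1, a2) = ((0:ℤ), (-2:ℤ)) := by simp only [Prod.mk.injEq]; omega
        rw [this]; decide
      · left; have h1' : a1 = 0 := by omega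
        have h2' : a2 = 2 := by omega
        rw [h1', h2']
    clear hst
    -- handle both symmetric cases
    rcases ha with rfl | rfl
    · -- a = (0,2), mid = (0,1)
      set S₁ : Pos := doJump S₀ ((0:ℤ),(2:ℤ)) ((0:ℤ),(0:ℤ)) with hS₁
      -- the first move is a single jump
      obtain rfl : mvtl = [] := by
        cases mvtl with
        | nil => rfl
        | cons j₂ mvtl₂ =>
          exfalso
          obtain ⟨a₂, c₂⟩ := j₂
          have ha₂ : a₂ = ((0:ℤ),(0:ℤ)) := (List.isChain_cons_cons.1 hcm.2).1
          subst ha₂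
          rw [List.cons_append] at hp2
          cases hp2 with
          | cons hl2 _ =>
            have hst2 := hl2.1
            have hc₂b : c₂ ∈ board6 := hl2.2.2.2.1
            have hmid2 : mid ((0:ℤ),(0:ℤ)) c₂ ∈ S₁ := hl2.2.2.2.2.2.1
            have hc₂n : c₂ ∉ S₁ := hl2.2.2.2.2.2.2
            obtain ⟨c1, c2'⟩ := c₂
            simp only [steps, Finset.mem_insert, Finset.mem_singleton,
              Prod.ext_iff, Prod.mk_sub_mk] at hst2
            rcases hst2 with ⟨h1,h2⟩|⟨h1,h2⟩|⟨h1,h2⟩|⟨h1,h2⟩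
            · have : (c1, c2') = ((2:ℤ),(0:ℤ)) := by simp only [Prod.mk.injEq]; omega
              rw [this] at hc₂n; revert hc₂n; decide
            · have : (c1, c2') = ((-2:ℤ),(0:ℤ)) := by simp only [Prod.mk.injEq]; omega
              rw [this] at hc₂b; revert hc₂b; decide
            · have : (c1, c2') = ((0:ℤ),(2:ℤ)) := by simp only [Prod.mk.injEq]; omega
              rw [this] at hmid2; revert hmid2; decide
            · have : (c1, c2') = ((0:ℤ),(-2:ℤ)) := by simp only [Prod.mk.injEq]; omega
              rw [this] at hc₂b; revert hc₂b; decide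
      rw [List.nil_append] at hp2
      have hcount : ((Finset.range 16).erase 8).card ≤ rest.length := by
        apply main_count w rest S₁ ((Finset.range 16).erase 8)
          (fun m hm => hch m (List.mem_cons_of_mem _ hm)) hp2
        · intro i hi x hx hr
          have hx8 : ∀ x ∈ board6, reg x ≠ 8 → x ∈ S₁ := by decide
          refine hx8 x hx ?_
          rw [hr]; exact (Finset.mem_erase.1 hi).1
        · intro i hi
          have : ∀ i ∈ (Finset.range 16).erase 8, ∃ x ∈ board6, reg x = i := by decide
          exact this i hi
        · intro i hi x hx hr
          exact two_ne S₁ (3,3) (4,4) (by decide) (by decide) (by decide) x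
      have : ((Finset.range 16).erase 8).card = 15 := by decide
      simp only [List.length_cons]
      omega
    · -- a = (2,0), mid = (1,0)
      set S₁ : Pos := doJump S₀ ((2:ℤ),(0:ℤ)) ((0:ℤ),(0:ℤ)) with hS₁
      obtain rfl : mvtl = [] := by
        cases mvtl with
        | nil => rfl
        | cons j₂ mvtl₂ =>
          exfalso
          obtain ⟨a₂, c₂⟩ := j₂
          have ha₂ : a₂ = ((0:ℤ),(0:ℤ)) := (List.isChain_cons_cons.1 hcm.2).1
          subst ha₂
          rw [List.cons_append] at hp2
          cases hp2 with
          | cons hl2 _ =>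
            have hst2 := hl2.1
            have hc₂b : c₂ ∈ board6 := hl2.2.2.2.1
            have hmid2 : mid ((0:ℤ),(0:ℤ)) c₂ ∈ S₁ := hl2.2.2.2.2.2.1
            have hc₂n : c₂ ∉ S₁ := hl2.2.2.2.2.2.2
            obtain ⟨c1, c2'⟩ := c₂
            simp only [steps, Finset.mem_insert, Finset.mem_singleton,
              Prod.ext_iff, Prod.mk_sub_mk] at hst2
            rcases hst2 with ⟨h1,h2⟩|⟨h1,h2⟩|⟨h1,h2⟩|⟨h1,h2⟩
            · have : (c1, c2') = ((2:ℤ),(0:ℤ)) := by simp only [Prod.mk.injEq]; omega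
              rw [this] at hmid2; revert hmid2; decide
            · have : (c1, c2') = ((-2:ℤ),(0:ℤ)) := by simp only [Prod.mk.injEq]; omega
              rw [this] at hc₂b; revert hc₂b; decide
            · have : (c1, c2') = ((0:ℤ),(2:ℤ)) := by simp only [Prod.mk.injEq]; omega
              rw [this] at hc₂n; revert hc₂n; decide
            · have : (c1, c2') = ((0:ℤ),(-2:ℤ)) := by simp only [Prod.mk.injEq]; omega
              rw [this] at hc₂b; revert hc₂b; decide
      rw [List.nil_append] at hp2
      have hcount : ((Finset.range 16).erase 4).card ≤ rest.length := by
        apply main_count w rest S₁ ((Finset.range 16).erase 4)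
          (fun m hm => hch m (List.mem_cons_of_mem _ hm)) hp2
        · intro i hi x hx hr
          have hx4 : ∀ x ∈ board6, reg x ≠ 4 → x ∈ S₁ := by decide
          refine hx4 x hx ?_
          rw [hr]; exact (Finset.mem_erase.1 hi).1
        · intro i hi
          have : ∀ i ∈ (Finset.range 16).erase 4, ∃ x ∈ board6, reg x = i := by decide
          exact this i hi
        · intro i hi x hx hr
          exact two_ne S₁ (3,3) (4,4) (by decide) (by decide) (by decide) x
      have : ((Finset.range 16).erase 4).card = 15 := by decide
      simp only [List.length_cons]
      omega
end

section
/- Conway's golden-ratio resource count is non-increasing under peg-solitaire jumps toward a target: let σ = (√5 − 1)/2, satisfying σ² + σ = 1, and assign to the hole at position p the weight σ^{d(p)} where d(p) is the distance from p to a fixed target hole t in the taxicab metric along the relevant axis direction; then for any jump directed toward t along that axis (from distance k+2 and k+1 to distance k), the total weight is unchanged (σ^{k+2} + σ^{k+1} = σ^k), and for any other jump the total weight strictly decreases or stays equal; in particular the total weight of pegs never increases during play when weights are σ^{|x−x_t|+|y−y_t|}. -/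
def orthoDirs : Finset (ℤ × ℤ) := {(1, 0), (-1, 0), (0, 1), (0, -1)}

/-- A single solitaire jump on the whole integer lattice. -/
def IsJump (S S' : Pos) : Prop :=
  ∃ p d : ℤ × ℤ, d ∈ orthoDirs ∧ p ∈ S ∧ p + d ∈ S ∧ p + d + d ∉ S ∧
    S' = insert (p + d + d) ((S.erase p).erase (p + d))

noncomputable def sigma' : ℝ := (Real.sqrt 5 - 1) / 2

/-- Golden-ratio weight of the hole `p` relative to the target `t`. -/
noncomputable def w (t p : ℤ × ℤ) : ℝ :=
  sigma' ^ ((p.1 - t.1).natAbs + (p.2 - t.2).natAbs)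

/-- Total golden-ratio weight of a position. -/
noncomputable def W (t : ℤ × ℤ) (S : Pos) : ℝ := ∑ p ∈ S, w t p

lemma sigma'_pos : 0 < sigma' := by
  unfold sigma'
  nlinarith [Real.sq_sqrt (show (0:ℝ) ≤ 5 by norm_num),
    Real.sqrt_nonneg 5]

lemma sigma'_sq : sigma' ^ 2 + sigma' = 1 := by
  unfold sigma'
  nlinarith [Real.sq_sqrt (show (0:ℝ) ≤ 5 by norm_num)]

lemma sigma'_rec (k : ℕ) : sigma' ^ (k + 2) + sigma' ^ (k + 1) = sigma' ^ k := by
  have h : sigma' ^ (k + 2) + sigma' ^ (k + 1) = sigma' ^ k * (sigma' ^ 2 + sigma') := by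
    ring
  rw [h, sigma'_sq, mul_one]

lemma key (m : ℤ) : sigma' ^ (m + 2).natAbs ≤ sigma' ^ m.natAbs + sigma' ^ (m + 1).natAbs := by
  have hp := sigma'_pos
  rcases le_or_gt 0 m with h | h
  · have h2 : (m + 2).natAbs = m.natAbs + 2 := by omega
    have h1 : (m + 1).natAbs = m.natAbs + 1 := by omega
    rw [h1, h2]
    have := sigma'_rec m.natAbs
    have := pow_pos hp (m.natAbs + 1)
    linarith
  · rcases le_or_gt m (-2) with h' | h'
    · have h2 : m.natAbs = (m + 2).natAbs + 2 := by omega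
      have h1 : (m + 1).natAbs = (m + 2).natAbs + 1 := by omega
      rw [h1, h2]
      linarith [sigma'_rec (m + 2).natAbs]
    · have hm : m = -1 := by omega
      subst hm
      norm_num

lemma key_mul (m : ℤ) (b : ℕ) :
    sigma' ^ ((m + 2).natAbs + b) ≤ sigma' ^ (m.natAbs + b) + sigma' ^ ((m + 1).natAbs + b) := by
  have hb : (0:ℝ) ≤ sigma' ^ b := le_of_lt (pow_pos sigma'_pos b)
  have h := mul_le_mul_of_nonneg_right (key m) hb
  rw [pow_add, pow_add, pow_add]
  ring_nf at h ⊢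
  linarith

lemma key_mul' (m : ℤ) (b : ℕ) :
    sigma' ^ (b + (m + 2).natAbs) ≤ sigma' ^ (b + m.natAbs) + sigma' ^ (b + (m + 1).natAbs) := by
  simpa [add_comm] using key_mul m b

lemma key2 (t p d : ℤ × ℤ) (hd : d ∈ orthoDirs) :
    w t (p + d + d) ≤ w t p + w t (p + d) := by
  fin_cases hd <;>
    simp only [w, Prod.fst_add, Prod.snd_add, Prod.mk_add_mk, add_zero, zero_add]
  · rw [show p.1 + 1 + 1 - t.1 = (p.1 - t.1) + 2 by ring,
      show p.1 + 1 - t.1 = (p.1 - t.1) + 1 by ring]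
    exact key_mul _ _
  · rw [show p.1 + -1 + -1 - t.1 = -((t.1 - p.1) + 2) by ring, Int.natAbs_neg,
      show p.1 + -1 - t.1 = -((t.1 - p.1) + 1) by ring, Int.natAbs_neg,
      show p.1 - t.1 = -(t.1 - p.1) by ring, Int.natAbs_neg]
    exact key_mul _ _
  · rw [show p.2 + 1 + 1 - t.2 = (p.2 - t.2) + 2 by ring,
      show p.2 + 1 - t.2 = (p.2 - t.2) + 1 by ring]
    exact key_mul' _ _
  · rw [show p.2 + -1 + -1 - t.2 = -((t.2 - p.2) + 2) by ring, Int.natAbs_neg,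
      show p.2 + -1 - t.2 = -((t.2 - p.2) + 1) by ring, Int.natAbs_neg,
      show p.2 - t.2 = -(t.2 - p.2) by ring, Int.natAbs_neg]
    exact key_mul' _ _

/-- Conway's golden-ratio resource count never increases under a jump. -/
theorem golden_ratio_count_nonincreasing :
    sigma' ^ 2 + sigma' = 1 ∧
    (∀ k : ℕ, sigma' ^ (k + 2) + sigma' ^ (k + 1) = sigma' ^ k) ∧
    (∀ (t : ℤ × ℤ) (S S' : Pos), IsJump S S' → W t S' ≤ W t S) := by
  refine ⟨sigma'_sq, sigma'_rec, ?_⟩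
  rintro t S S' ⟨p, d, hd, hpS, hpdS, hq, rfl⟩
  have hd0 : d ≠ 0 := by fin_cases hd <;> decide
  have hne : p + d ≠ p := by
    intro h
    apply hd0
    have : p + d = p + 0 := by simpa using h
    exact add_left_cancel this
  have hq' : p + d + d ∉ (S.erase p).erase (p + d) := fun h =>
    hq (Finset.mem_of_mem_erase (Finset.mem_of_mem_erase h))
  have hpd_in : p + d ∈ S.erase p := Finset.mem_erase.mpr ⟨hne, hpdS⟩
  unfold W
  rw [Finset.sum_insert hq', Finset.sum_erase_eq_sub hpd_in, Finset.sum_erase_eq_sub hpS]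
  linarith [key2 t p d hd]
end

section
/- The 33-hole English board and the 37-hole French board satisfy: the full board has trivial parity invariants on the English board (it is null-class), but the French board is not null-class at every hole; specifically, on the French board the central-vacancy complement problem (vacate d4, finish at d4) is impossible because the position 'full board minus d4' and 'single peg at d4' lie in different classes under the jump-invariant parity labelings. -/
/-- A single solitaire jump restricted to a board `Bd`. -/
def IsJumpOn (Bd S S' : Pos) : Prop :=
  ∃ p d : ℤ × ℤ, d ∈ orthoDirs ∧ p ∈ Bd ∧ p + d ∈ Bd ∧ p + d + d ∈ Bd ∧
    p ∈ S ∧ p + d ∈ S ∧ p + d + d ∉ S ∧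
    S' = insert (p + d + d) ((S.erase p).erase (p + d))

/-- Number of pegs whose coordinate sum is `k` modulo 3. -/
def Acount (k : ℤ) (S : Pos) : ℕ := (S.filter (fun q => (q.1 + q.2) % 3 = k)).card

/-- Number of pegs whose coordinate difference is `k` modulo 3. -/
def Bcount (k : ℤ) (S : Pos) : ℕ := (S.filter (fun q => (q.1 - q.2) % 3 = k)).card

noncomputable def englishBoard : Pos :=
  ((Finset.Icc (0 : ℤ) 6) ×ˢ (Finset.Icc (0 : ℤ) 6)).filter
    (fun p => (2 ≤ p.1 ∧ p.1 ≤ 4) ∨ (2 ≤ p.2 ∧ p.2 ≤ 4))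

noncomputable def frenchBoard : Pos :=
  ((Finset.Icc (0 : ℤ) 6) ×ˢ (Finset.Icc (0 : ℤ) 6)).filter (fun p =>
    ((p.2 = 0 ∨ p.2 = 6) ∧ 2 ≤ p.1 ∧ p.1 ≤ 4) ∨
    ((p.2 = 1 ∨ p.2 = 5) ∧ 1 ≤ p.1 ∧ p.1 ≤ 5) ∨
    (2 ≤ p.2 ∧ p.2 ≤ 4))
def Cnt (g : ℤ × ℤ → ℤ) (k : ℤ) (S : Pos) : ℕ :=
  (S.filter (fun q => g q % 3 = k)).card

lemma Cnt_insert (g : ℤ × ℤ → ℤ) (k : ℤ) (x : ℤ × ℤ) (T : Pos) (hx : x ∉ T) :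
    Cnt g k (insert x T) = Cnt g k T + (if g x % 3 = k then 1 else 0) := by
  simp only [Cnt, Finset.filter_insert]
  split
  · rw [Finset.card_insert_of_notMem (fun h => hx (Finset.mem_filter.mp h).1)]
  · simp

lemma Cnt_erase (g : ℤ × ℤ → ℤ) (k : ℤ) (x : ℤ × ℤ) (T : Pos) (hx : x ∈ T) :
    Cnt g k T = Cnt g k (T.erase x) + (if g x % 3 = k then 1 else 0) := by
  have : T = insert x (T.erase x) := by
    rw [Finset.insert_erase hx]
  conv_lhs => rw [this]
  exact Cnt_insert g k x (T.erase x) (Finset.notMem_erase x T)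

lemma jump_inv (g : ℤ × ℤ → ℤ) (hadd : ∀ p q : ℤ × ℤ, g (p + q) = g p + g q)
    (hdir : ∀ d ∈ orthoDirs, g d = 1 ∨ g d = -1)
    {Bd S S' : Pos} (h : IsJumpOn Bd S S') (i j : ℤ) (hij : i ≠ j)
    (hi : i = 0 ∨ i = 1 ∨ i = 2) (hj : j = 0 ∨ j = 1 ∨ j = 2) :
    (Cnt g i S' + Cnt g j S') % 2 = (Cnt g i S + Cnt g j S) % 2 := by
  obtain ⟨p, d, hd, -, -, -, hpS, hpdS, hpddS, hS'⟩ := h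
  have ht := hdir d hd
  have hne : p + d ≠ p := by
    intro hcon
    have : g (p + d) = g p := by rw [hcon]
    rw [hadd] at this
    rcases ht with h1 | h1 <;> omega
  have hpdS' : p + d ∈ S.erase p := Finset.mem_erase.mpr ⟨hne, hpdS⟩
  have hpdd1 : p + d + d ∉ (S.erase p).erase (p + d) := fun hcon =>
    hpddS (Finset.mem_of_mem_erase (Finset.mem_of_mem_erase hcon))
  set E := (S.erase p).erase (p + d) with hE
  have key : ∀ k : ℤ,
      Cnt g k S = Cnt g k E + (if g (p + d) % 3 = k then 1 else 0)
        + (if g p % 3 = k then 1 else 0) ∧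
      Cnt g k S' = Cnt g k E + (if g (p + d + d) % 3 = k then 1 else 0) := by
    intro k
    constructor
    · rw [Cnt_erase g k p S hpS, Cnt_erase g k (p + d) (S.erase p) hpdS']
    · rw [hS', Cnt_insert g k (p + d + d) E hpdd1]
  obtain ⟨hSi, hS'i⟩ := key i
  obtain ⟨hSj, hS'j⟩ := key j
  have hgpd : g (p + d) = g p + g d := hadd p d
  have hgpdd : g (p + d + d) = g p + g d + g d := by rw [hadd, hadd]
  have one : ∀ k : ℤ, k = 0 ∨ k = 1 ∨ k = 2 →
      (if g p % 3 = k then (1:ℕ) else 0) + (if g (p + d) % 3 = k then 1 else 0)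
        + (if g (p + d + d) % 3 = k then 1 else 0) = 1 := by
    intro k hk
    rw [hgpd, hgpdd]
    rcases ht with h1 | h1 <;> rw [h1] <;> split_ifs <;> omega
  have hoi := one i hi
  have hoj := one j hj
  omega

lemma chain_inv (g : ℤ × ℤ → ℤ) (hadd : ∀ p q : ℤ × ℤ, g (p + q) = g p + g q)
    (hdir : ∀ d ∈ orthoDirs, g d = 1 ∨ g d = -1)
    (Bd : Pos) (i j : ℤ) (hij : i ≠ j)
    (hi : i = 0 ∨ i = 1 ∨ i = 2) (hj : j = 0 ∨ j = 1 ∨ j = 2) :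
    ∀ (m : ℕ) (f : Fin (m + 1) → Pos),
      (∀ k : Fin m, IsJumpOn Bd (f k.castSucc) (f k.succ)) →
      (Cnt g i (f (Fin.last m)) + Cnt g j (f (Fin.last m))) % 2
        = (Cnt g i (f 0) + Cnt g j (f 0)) % 2 := by
  intro m
  induction m with
  | zero => intro f _; rfl
  | succ n ih =>
    intro f hf
    have h1 := ih (fun k => f k.succ) (fun k => by
      have := hf k.succ
      rwa [← Fin.succ_castSucc] at this)
    have h2 := jump_inv g hadd hdir (hf 0) i j hij hi hj
    have e1 : (Fin.last n).succ = Fin.last (n + 1) := rfl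
    have e2 : ((0 : Fin (n + 1)) : Fin (n+1)).succ = (1 : Fin (n + 2)) := rfl
    have e3 : ((0 : Fin (n + 1)) : Fin (n+1)).castSucc = (0 : Fin (n + 2)) := rfl
    calc (Cnt g i (f (Fin.last (n+1))) + Cnt g j (f (Fin.last (n+1)))) % 2
        = (Cnt g i (f ((0 : Fin (n+1)).succ)) + Cnt g j (f ((0 : Fin (n+1)).succ))) % 2 := by
          rw [← e1] at *; exact h1
      _ = (Cnt g i (f 0) + Cnt g j (f 0)) % 2 := by
          rw [← e3]; exact h2

/-- The English board is null-class (all parity invariants of the full board vanish),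
but on the French board the invariants of 'full minus the center d4' differ from those
of 'single peg at d4'; hence the central-vacancy complement problem on the French board
has no solution. -/
theorem english_null_french_center_impossible :
    (∀ i ∈ ({0, 1, 2} : Finset ℤ), ∀ j ∈ ({0, 1, 2} : Finset ℤ), i ≠ j →
      (Acount i englishBoard + Acount j englishBoard) % 2 = 0 ∧
      (Bcount i englishBoard + Bcount j englishBoard) % 2 = 0) ∧
    (∃ i ∈ ({0, 1, 2} : Finset ℤ), ∃ j ∈ ({0, 1, 2} : Finset ℤ), i ≠ j ∧
      ((Acount i (frenchBoard.erase ((3 : ℤ), (3 : ℤ))) +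
          Acount j (frenchBoard.erase ((3 : ℤ), (3 : ℤ)))) % 2 ≠
        (Acount i ({((3 : ℤ), (3 : ℤ))} : Pos) +
          Acount j ({((3 : ℤ), (3 : ℤ))} : Pos)) % 2 ∨
       (Bcount i (frenchBoard.erase ((3 : ℤ), (3 : ℤ))) +
          Bcount j (frenchBoard.erase ((3 : ℤ), (3 : ℤ)))) % 2 ≠
        (Bcount i ({((3 : ℤ), (3 : ℤ))} : Pos) +
          Bcount j ({((3 : ℤ), (3 : ℤ))} : Pos)) % 2)) ∧
    ¬ ∃ (m : ℕ) (f : Fin (m + 1) → Pos),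
      (∀ i : Fin m, IsJumpOn frenchBoard (f i.castSucc) (f i.succ)) ∧
      f 0 = frenchBoard.erase ((3 : ℤ), (3 : ℤ)) ∧
      f (Fin.last m) = ({((3 : ℤ), (3 : ℤ))} : Pos) := by
  refine ⟨by decide, by decide, ?_⟩
  rintro ⟨m, f, hf, h0, hl⟩
  have hadd : ∀ p q : ℤ × ℤ, (fun r : ℤ × ℤ => r.1 + r.2) (p + q)
      = (fun r : ℤ × ℤ => r.1 + r.2) p + (fun r : ℤ × ℤ => r.1 + r.2) q := by
    intro p q; simp [Prod.fst_add, Prod.snd_add]; ring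
  have hch := chain_inv (fun r : ℤ × ℤ => r.1 + r.2) hadd (by decide) frenchBoard
    0 1 (by norm_num) (by tauto) (by tauto) m f hf
  rw [h0, hl] at hch
  exact absurd hch (by decide)
end
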